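/- Let V : [0,∞) → M_n(ℂ) be continuous with V(x)† = V(x) for all x, let κ > 0, let A and B be n×n matrices with A†A + B†B positive definite, let Q be an orthogonal projection, and let C be an n×n matrix with C·Q = C and such that C·v = 0 and Q·v = v together imply v = 0. Let Φ : [0,∞) → M_n(ℂ) be twice continuously differentiable with Φ''(x) = (V(x) + κ²·I)·Φ(x) for all x ≥ 0, Φ(0) = A·C, Φ'(0) = B·C, and assume x ↦ Φ(x)†Φ(x) is integrable on [0,∞). Then for every x ≥ 0 and every nonzero v ∈ ℂⁿ with Q·v = v one has ∫ₓ^∞ ‖Φ(y)·v‖² dy > 0; equivalently, the Hermitian matrix W(x) := ∫ₓ^∞ Φ(y)†Φ(y) dy is positive definite on the range of Q for every x ≥ 0. (The invertibility of the restriction [W_N(x)]₁ established in the proof of Theorem 6.1.) -/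

import Mathlib

open Matrix MeasureTheory Set
open scoped ComplexOrder

attribute [local instance] Matrix.normedAddCommGroup Matrix.normedSpace

noncomputable instance matrixContinuousENorm {n : ℕ} : ContinuousENorm (Matrix (Fin n) (Fin n) ℂ) :=
  SeminormedAddGroup.toContinuousENorm

lemma mulVec_norm_le' {n : ℕ} (M : Matrix (Fin n) (Fin n) ℂ) (u : Fin n → ℂ) :
    ‖M *ᵥ u‖ ≤ n * ‖M‖ * ‖u‖ := by
  rw [pi_norm_le_iff_of_nonneg (by positivity)]
  intro i
  calc ‖(M *ᵥ u) i‖ = ‖∑ j, M i j * u j‖ := rfl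
  _ ≤ ∑ j, ‖M i j * u j‖ := norm_sum_le _ _
  _ ≤ ∑ _j : Fin n, ‖M‖ * ‖u‖ := Finset.sum_le_sum fun j _ => by
      rw [norm_mul]
      exact mul_le_mul (M.norm_entry_le_entrywise_sup_norm) (norm_le_pi_norm u j)
        (norm_nonneg _) (norm_nonneg _)
  _ = n * ‖M‖ * ‖u‖ := by simp [Finset.sum_const]; ring


lemma backward_vanish' {n : ℕ} {W : ℝ → Matrix (Fin n) (Fin n) ℂ}
    (hW : ContinuousOn W (Ici (0:ℝ)))
    {f f' : ℝ → (Fin n → ℂ)} {x : ℝ} (hx : 0 ≤ x)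
    (hf1 : ∀ t ∈ Ici (0:ℝ), HasDerivWithinAt f (f' t) (Ici (0:ℝ)) t)
    (hf2 : ∀ t ∈ Ici (0:ℝ), HasDerivWithinAt f' (W t *ᵥ f t) (Ici (0:ℝ)) t)
    (hzero : ∀ y ∈ Ioi x, f y = 0) :
    f 0 = 0 ∧ f' 0 = 0 := by
  set b : ℝ := x + 1 with hb
  have hxb : x < b := by simp [hb]
  have hb0 : (0:ℝ) < b := lt_of_le_of_lt hx hxb
  -- f' vanishes beyond x
  have hzero' : ∀ y ∈ Ioi x, f' y = 0 := by
    intro y hy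
    have hy0 : (0:ℝ) < y := lt_of_le_of_lt hx hy
    have h1 : HasDerivAt f (f' y) y :=
      (hf1 y (le_of_lt hy0)).hasDerivAt (Ici_mem_nhds hy0)
    have heq : f =ᶠ[nhds y] (fun _ => 0) :=
      Filter.eventually_of_mem (Ioi_mem_nhds hy) hzero
    have h2 : HasDerivAt (fun _ : ℝ => (0 : Fin n → ℂ)) (f' y) y :=
      HasDerivAt.congr_of_eventuallyEq h1 heq.symm
    exact (h2.unique (hasDerivAt_const y 0)).symm ▸ rfl
  -- clamped coefficient matrix and uniform bound
  obtain ⟨Cb, hCb⟩ := (isCompact_Icc (a := (0:ℝ)) (b := b)).exists_bound_of_continuousOn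
    (hW.mono (Icc_subset_Ici_self))
  have hCb0 : 0 ≤ Cb := le_trans (norm_nonneg _) (hCb 0 ⟨le_refl _, le_of_lt hb0⟩)
  set Wc : ℝ → Matrix (Fin n) (Fin n) ℂ := fun t => W (min (max t 0) b) with hWc
  have hWcmem : ∀ t : ℝ, min (max t 0) b ∈ Icc (0:ℝ) b := fun t =>
    ⟨le_min (le_max_right t 0) (le_of_lt hb0), min_le_right _ _⟩
  have hWcb : ∀ t : ℝ, ‖Wc t‖ ≤ Cb := fun t => hCb _ (hWcmem t)
  have hWceq : ∀ t ∈ Icc (0:ℝ) b, Wc t = W t := by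
    intro t ht
    simp only [hWc]
    rw [max_eq_left ht.1, min_eq_left ht.2]
  -- vector field
  set K : NNReal := (max 1 ((n:ℝ) * Cb)).toNNReal with hK
  have hKcoe : (K : ℝ) = max 1 ((n:ℝ) * Cb) :=
    Real.coe_toNNReal _ (le_trans zero_le_one (le_max_left _ _))
  set vf : ℝ → ((Fin n → ℂ) × (Fin n → ℂ)) → ((Fin n → ℂ) × (Fin n → ℂ)) :=
    fun t p => (p.2, Wc t *ᵥ p.1) with hvf
  have hlip : ∀ t, LipschitzWith K (vf t) := by
    intro t
    apply LipschitzWith.of_dist_le_mul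
    intro p q
    rw [Prod.dist_eq, hKcoe]
    have h2 : dist (Wc t *ᵥ p.1) (Wc t *ᵥ q.1) ≤ (n:ℝ) * Cb * dist p.1 q.1 := by
      rw [dist_eq_norm, ← Matrix.mulVec_sub]
      calc ‖Wc t *ᵥ (p.1 - q.1)‖ ≤ n * ‖Wc t‖ * ‖p.1 - q.1‖ := mulVec_norm_le' _ _
      _ ≤ (n:ℝ) * Cb * dist p.1 q.1 := by
          rw [← dist_eq_norm]
          gcongr
          exact hWcb t
    apply max_le
    · calc dist (vf t p).1 (vf t q).1 = dist p.2 q.2 := rfl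
      _ ≤ dist p q := le_max_right _ _
      _ ≤ max 1 ((n:ℝ) * Cb) * dist p q := by
          nlinarith [dist_nonneg (x := p) (y := q), le_max_left (1:ℝ) ((n:ℝ)*Cb)]
    · calc dist (vf t p).2 (vf t q).2 ≤ (n:ℝ) * Cb * dist p.1 q.1 := h2
      _ ≤ max 1 ((n:ℝ) * Cb) * dist p q := by
          have h1 : dist p.1 q.1 ≤ dist p q := le_max_left _ _
          have h3 : (0:ℝ) ≤ (n:ℝ) * Cb := by positivity
          nlinarith [le_max_right (1:ℝ) ((n:ℝ)*Cb), dist_nonneg (x := p) (y := q)]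
  -- pair solution
  set u : ℝ → (Fin n → ℂ) × (Fin n → ℂ) := fun t => (f t, f' t) with hu
  have hucont : ContinuousOn u (Icc 0 b) := fun t ht =>
    (ContinuousWithinAt.prodMk ((hf1 t ht.1).continuousWithinAt) ((hf2 t ht.1).continuousWithinAt)).mono
      Icc_subset_Ici_self
  have hud : ∀ t ∈ Ioc (0:ℝ) b, HasDerivWithinAt u (vf t (u t)) (Iic t) t := by
    intro t ht
    have h1 : HasDerivAt f (f' t) t := (hf1 t (le_of_lt ht.1)).hasDerivAt (Ici_mem_nhds ht.1)
    have h2 : HasDerivAt f' (W t *ᵥ f t) t :=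
      (hf2 t (le_of_lt ht.1)).hasDerivAt (Ici_mem_nhds ht.1)
    have h3 : HasDerivAt u (f' t, W t *ᵥ f t) t := h1.prodMk h2
    have h4 : vf t (u t) = (f' t, W t *ᵥ f t) := by
      simp only [hvf, hu]
      rw [hWceq t ⟨le_of_lt ht.1, ht.2⟩]
    rw [h4]
    exact h3.hasDerivWithinAt
  have hgd : ∀ t ∈ Ioc (0:ℝ) b,
      HasDerivWithinAt (fun _ : ℝ => ((0,0) : (Fin n → ℂ) × (Fin n → ℂ)))
        (vf t (0,0)) (Iic t) t := by
    intro t ht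
    have : vf t ((0,0) : (Fin n → ℂ) × (Fin n → ℂ)) = (0,0) := by
      simp [hvf, Matrix.mulVec_zero]
    rw [this]
    exact (hasDerivWithinAt_const _ _ _)
  have hub : u b = (0, 0) := by
    simp only [hu, Prod.mk.injEq]
    exact ⟨hzero b hxb, hzero' b hxb⟩
  have := ODE_solution_unique_of_mem_Icc_left
    (s := fun _ => (univ : Set ((Fin n → ℂ) × (Fin n → ℂ))))
    (fun t _ => (hlip t).lipschitzOnWith)
    hucont hud (fun _ _ => trivial)
    (continuousOn_const) hgd (fun _ _ => trivial) hub
  have h0 := this (left_mem_Icc.mpr (le_of_lt hb0))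
  exact ⟨congrArg Prod.fst h0, congrArg Prod.snd h0⟩

lemma sum_sq_eq_re' {n : ℕ} (M : Matrix (Fin n) (Fin n) ℂ) (v : Fin n → ℂ) :
    ∑ i, ‖(M *ᵥ v) i‖ ^ 2 = (star v ⬝ᵥ ((Mᴴ * M) *ᵥ v)).re := by
  have h1 : star v ⬝ᵥ ((Mᴴ * M) *ᵥ v) = star (M *ᵥ v) ⬝ᵥ (M *ᵥ v) := by
    rw [← Matrix.mulVec_mulVec, Matrix.dotProduct_mulVec, ← Matrix.star_mulVec]
  rw [h1]
  simp only [dotProduct, Pi.star_apply, Complex.re_sum]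
  refine Finset.sum_congr rfl fun i _ => ?_
  rw [Complex.star_def, ← Complex.normSq_eq_conj_mul_self]
  simp [Complex.normSq_eq_norm_sq, ← Complex.ofReal_pow]

lemma sum_sq_le' {n : ℕ} (M : Matrix (Fin n) (Fin n) ℂ) (v : Fin n → ℂ) :
    ∑ i, ‖(M *ᵥ v) i‖ ^ 2 ≤ (n:ℝ)^2 * ‖v‖^2 * ‖Mᴴ * M‖ := by
  rw [sum_sq_eq_re']
  calc (star v ⬝ᵥ ((Mᴴ * M) *ᵥ v)).re ≤ ‖star v ⬝ᵥ ((Mᴴ * M) *ᵥ v)‖ :=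
        Complex.re_le_norm _
  _ ≤ ∑ i, ‖(star v) i * (((Mᴴ * M) *ᵥ v)) i‖ := norm_sum_le _ _
  _ ≤ ∑ _i : Fin n, ‖v‖ * ((n:ℝ) * ‖Mᴴ * M‖ * ‖v‖) := by
      refine Finset.sum_le_sum fun i _ => ?_
      rw [norm_mul]
      refine mul_le_mul ?_ ?_ (norm_nonneg _) (norm_nonneg _)
      · simpa using norm_le_pi_norm v i
      · exact le_trans (norm_le_pi_norm _ i) (mulVec_norm_le' _ _)
  _ = (n:ℝ)^2 * ‖v‖^2 * ‖Mᴴ * M‖ := by simp [Finset.sum_const]; ring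

noncomputable def mulVecCLM {n : ℕ} (v : Fin n → ℂ) :
    Matrix (Fin n) (Fin n) ℂ →L[ℂ] (Fin n → ℂ) :=
  LinearMap.toContinuousLinearMap
    { toFun := fun M => M *ᵥ v
      map_add' := fun M N => Matrix.add_mulVec M N v
      map_smul' := fun c M => Matrix.smul_mulVec c M v }

/-- The invertibility of the restriction `[W_N(x)]₁` established in the proof of
Theorem 6.1: under the stated hypotheses on `V`, `A`, `B`, `Q`, `C` and the
Gel'fand–Levitan normalized bound-state solution `Φ`, for every `x ≥ 0` and every
nonzero `v` with `Q·v = v` one has `∫ₓ^∞ ‖Φ(y)·v‖² dy > 0`. -/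
theorem tail_normalization_positive {n : ℕ}
    (V : ℝ → Matrix (Fin n) (Fin n) ℂ) (κ : ℝ) (hκ : 0 < κ)
    (A B Q C : Matrix (Fin n) (Fin n) ℂ)
    (hVc : ContinuousOn V (Set.Ici (0:ℝ)))
    (hVherm : ∀ x ≥ (0:ℝ), (V x)ᴴ = V x)
    (hAB : (Aᴴ * A + Bᴴ * B).PosDef)
    (hQproj : Q * Q = Q) (hQherm : Qᴴ = Q)
    (hCQ : C * Q = C)
    (hCker : ∀ v : Fin n → ℂ, C *ᵥ v = 0 → Q *ᵥ v = v → v = 0)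
    (Φ Φ' Φ'' : ℝ → Matrix (Fin n) (Fin n) ℂ)
    (hΦ1 : ∀ x ∈ Set.Ici (0:ℝ), HasDerivWithinAt Φ (Φ' x) (Set.Ici (0:ℝ)) x)
    (hΦ2 : ∀ x ∈ Set.Ici (0:ℝ), HasDerivWithinAt Φ' (Φ'' x) (Set.Ici (0:ℝ)) x)
    (hΦ''c : ContinuousOn Φ'' (Set.Ici (0:ℝ)))
    (hΦeq : ∀ x ≥ (0:ℝ), Φ'' x = (V x + ((κ:ℂ)^2) • 1) * Φ x)
    (hΦ0 : Φ 0 = A * C) (hΦ'0 : Φ' 0 = B * C)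
    (hΦint : IntegrableOn (fun x => (Φ x)ᴴ * Φ x) (Set.Ioi (0:ℝ))) :
    ∀ x ≥ (0:ℝ), ∀ v : Fin n → ℂ, v ≠ 0 → Q *ᵥ v = v →
      0 < ∫ y in Set.Ioi x, ∑ i, ‖(Φ y *ᵥ v) i‖ ^ 2 := by
  intro x hx v hv hQv
  set W : ℝ → Matrix (Fin n) (Fin n) ℂ := fun t => V t + ((κ:ℂ)^2) • 1 with hWdef
  have hWcont : ContinuousOn W (Ici (0:ℝ)) := hVc.add continuousOn_const
  set L := mulVecCLM v with hL
  set f : ℝ → (Fin n → ℂ) := fun y => Φ y *ᵥ v with hfdef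
  set f' : ℝ → (Fin n → ℂ) := fun y => Φ' y *ᵥ v with hf'def
  have hf1 : ∀ t ∈ Ici (0:ℝ), HasDerivWithinAt f (f' t) (Ici (0:ℝ)) t := by
    intro t ht
    exact ((L.restrictScalars ℝ).hasFDerivAt (x := Φ t)).comp_hasDerivWithinAt t (hΦ1 t ht)
  have hf2 : ∀ t ∈ Ici (0:ℝ), HasDerivWithinAt f' (W t *ᵥ f t) (Ici (0:ℝ)) t := by
    intro t ht
    have h := ((L.restrictScalars ℝ).hasFDerivAt (x := Φ' t)).comp_hasDerivWithinAt t (hΦ2 t ht)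
    have he : L (Φ'' t) = W t *ᵥ f t := by
      show Φ'' t *ᵥ v = W t *ᵥ (Φ t *ᵥ v)
      rw [hΦeq t ht, Matrix.mulVec_mulVec]
    rw [← he]
    exact h
  -- key: f cannot vanish on all of Ioi x
  have key : ¬ (∀ y ∈ Ioi x, f y = 0) := by
    intro hzero
    obtain ⟨h0, h0'⟩ := backward_vanish' hWcont hx hf1 hf2 hzero
    have hAw : A *ᵥ (C *ᵥ v) = 0 := by
      rw [Matrix.mulVec_mulVec, ← hΦ0]; exact h0
    have hBw : B *ᵥ (C *ᵥ v) = 0 := by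
      rw [Matrix.mulVec_mulVec, ← hΦ'0]; exact h0'
    have hsum : (Aᴴ * A + Bᴴ * B) *ᵥ (C *ᵥ v) = 0 := by
      rw [Matrix.add_mulVec, ← Matrix.mulVec_mulVec, ← Matrix.mulVec_mulVec, hAw, hBw,
        Matrix.mulVec_zero, Matrix.mulVec_zero, add_zero]
    have hw : C *ᵥ v = 0 := by
      by_contra hw
      have := hAB.dotProduct_mulVec_pos hw
      rw [hsum, dotProduct_zero] at this
      exact lt_irrefl _ this
    exact hv (hCker v hw hQv)
  -- the integrand
  set g : ℝ → ℝ := fun y => ∑ i, ‖(Φ y *ᵥ v) i‖ ^ 2 with hgdef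
  have hgnn : ∀ y, 0 ≤ g y := fun y => Finset.sum_nonneg fun i _ => by positivity
  have hΦcont : ContinuousOn Φ (Ici (0:ℝ)) := fun t ht => (hΦ1 t ht).continuousWithinAt
  have hgcont : ContinuousOn g (Ici (0:ℝ)) := by
    apply continuousOn_finset_sum
    intro i _
    exact (((continuous_apply i).comp L.continuous).comp_continuousOn hΦcont).norm.pow 2
  have hsub : Ioi x ⊆ Ici (0:ℝ) := fun y hy => le_of_lt (lt_of_le_of_lt hx hy)
  -- integrability
  have hΦint' : IntegrableOn (fun y => (Φ y)ᴴ * Φ y) (Ioi x) :=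
    hΦint.mono_set (Ioi_subset_Ioi hx)
  have hInt : IntegrableOn g (Ioi x) := by
    refine Integrable.mono' ((hΦint'.norm).const_mul ((n:ℝ)^2 * ‖v‖^2))
      ((hgcont.mono hsub).aestronglyMeasurable measurableSet_Ioi) ?_
    refine Filter.Eventually.of_forall fun y => ?_
    rw [Real.norm_of_nonneg (hgnn y)]
    exact sum_sq_le' (Φ y) v
  -- positivity
  rw [setIntegral_pos_iff_support_of_nonneg_ae
    (Filter.Eventually.of_forall fun y => hgnn y) hInt]
  push_neg at key
  obtain ⟨y₀, hy₀, hfy₀⟩ := key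
  have hgpos : 0 < g y₀ := by
    rcases Function.ne_iff.mp hfy₀ with ⟨i, hi⟩
    refine Finset.sum_pos' (fun j _ => by positivity) ⟨i, Finset.mem_univ i, ?_⟩
    have : (0:ℝ) < ‖f y₀ i‖ := norm_pos_iff.mpr hi
    positivity
  have hy₀pos : (0:ℝ) < y₀ := lt_of_le_of_lt hx hy₀
  have hca : ContinuousAt g y₀ := hgcont.continuousAt (Ici_mem_nhds hy₀pos)
  have h1 : g ⁻¹' (Ioi 0) ∈ nhds y₀ := hca.preimage_mem_nhds (Ioi_mem_nhds hgpos)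
  obtain ⟨s, hs_sub, hs_open, hy₀s⟩ := mem_nhds_iff.mp (Filter.inter_mem h1 (Ioi_mem_nhds hy₀))
  calc (0:ENNReal) < volume s := hs_open.measure_pos volume ⟨y₀, hy₀s⟩
  _ ≤ volume (Function.support g ∩ Ioi x) := by
      refine measure_mono (hs_sub.trans ?_)
      rintro y ⟨hy1, hy2⟩
      exact ⟨ne_of_gt hy1, hy2⟩
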